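/- Let $A$ be a group, $B$ a subgroup of $A$, and $C$ a normal subgroup of $A$. Let $M$ be a $B$-module (say, over $\mathbb{Z}$, with $B$ acting by automorphisms). Then there is an isomorphism of $A/C$-modules $(\mathrm{Ind}_B^A M)^C \cong \mathrm{Ind}_{B/(B\cap C)}^{A/C}(M^{B\cap C})$, where $\mathrm{Ind}_B^A M$ denotes the module of functions $f: A \to M$ with $f(ba) = b\cdot f(a)$ for $b \in B$, with $A$ acting by right translation, and $(-)^C$ denotes $C$-invariants. -/

import Mathlib

/-- `Ind_B^A M`: functions `f : A → M` with `f (b * a) = b • f a`, intersected with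
the `C`-invariants for the right-translation action of `A`. -/
abbrev IndModC (A : Type) [Group A] (B C : Subgroup A) (M : Type) [AddCommGroup M]
    [DistribMulAction B M] : Type :=
  {f : A → M // (∀ (b : B) (a : A), f (↑b * a) = b • f a) ∧
    ∀ c ∈ C, ∀ x : A, f (x * c) = f x}

/-- `Ind_{B/(B∩C)}^{A/C} (M^{B∩C})`: functions on `A ⧸ C` valued in the
`B ∩ C`-fixed points of `M`, equivariant for `B` (i.e. for `B/(B∩C)`). -/
abbrev IndModQ (A : Type) [Group A] (B C : Subgroup A) (M : Type) [AddCommGroup M]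
    [DistribMulAction B M] : Type :=
  {g : A ⧸ C → M // (∀ (b : B) (x : A), g ((↑b * x : A) : A ⧸ C) = b • g ((x : A ⧸ C))) ∧
    ∀ b : B, (b : A) ∈ C → ∀ y : A ⧸ C, b • g y = g y}

def indToFun {A : Type} [Group A] {B C : Subgroup A} [C.Normal] {M : Type} [AddCommGroup M]
    [DistribMulAction B M] (f : IndModC A B C M) : A ⧸ C → M :=
  Quotient.lift f.1 (by
    intro x y hxy
    have h : x⁻¹ * y ∈ C := QuotientGroup.leftRel_apply.mp hxy
    have := f.2.2 _ h x
    simpa using this.symm)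

@[simp] lemma indToFun_mk {A : Type} [Group A] {B C : Subgroup A} [C.Normal] {M : Type}
    [AddCommGroup M] [DistribMulAction B M] (f : IndModC A B C M) (x : A) :
    indToFun f ((x : A ⧸ C)) = f.1 x := rfl

/-- The `C`-invariants of `Ind_B^A M` are isomorphic, as `A ⧸ C`-modules, to
`Ind_{B/(B∩C)}^{A/C} (M^{B∩C})`, via `f ↦ (gC ↦ f g)`. -/
theorem invariants_of_induced_iso (A : Type) [Group A] (B C : Subgroup A) [C.Normal]
    (M : Type) [AddCommGroup M] [DistribMulAction B M] :
    ∃ e : IndModC A B C M ≃ IndModQ A B C M,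
      -- the isomorphism is `f ↦ (gC ↦ f g)`
      (∀ (f : IndModC A B C M) (x : A), (e f).1 ((x : A ⧸ C)) = f.1 x) ∧
      -- it is additive
      (∀ f g h : IndModC A B C M, (∀ x : A, h.1 x = f.1 x + g.1 x) →
        ∀ y : A ⧸ C, (e h).1 y = (e f).1 y + (e g).1 y) ∧
      -- it is `A ⧸ C`-equivariant (the action is by right translation)
      (∀ (f f' : IndModC A B C M) (a : A), (∀ x : A, f'.1 x = f.1 (x * a)) →
        ∀ y : A ⧸ C, (e f').1 y = (e f).1 (y * ((a : A ⧸ C)))) := by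
  refine ⟨{
    toFun := fun f => ⟨indToFun f, ?_, ?_⟩
    invFun := fun g => ⟨fun x => g.1 ((x : A ⧸ C)), ?_, ?_⟩
    left_inv := ?_
    right_inv := ?_ }, ?_, ?_, ?_⟩
  · intro b x
    exact f.2.1 b x
  · intro b hb y
    induction y using Quotient.inductionOn with
    | h x =>
      have h1 : b • indToFun f ((x : A ⧸ C)) = f.1 ((b : A) * x) := (f.2.1 b x).symm
      have h2 : (x : A)⁻¹ * ((b : A) * x) ∈ C := by simpa [mul_assoc] using Subgroup.Normal.conj_mem' ‹C.Normal› _ hb x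
      have h3 : f.1 ((b : A) * x) = f.1 x := by
        have := f.2.2 _ h2 x
        simpa [mul_assoc] using this
      simpa [indToFun_mk] using h1.trans h3
  · intro b a
    exact g.2.1 b a
  · intro c hc x
    have : ((x * c : A) : A ⧸ C) = ((x : A) : A ⧸ C) := by
      apply Quotient.sound
      exact QuotientGroup.leftRel_apply.mpr (by simpa using hc)
    simp [this]
  · intro f
    ext x
    rfl
  · intro g
    ext y
    induction y using Quotient.inductionOn with
    | h x => rfl
  · intro f x
    rfl
  · intro f g h hadd y
    induction y using Quotient.inductionOn with
    | h x => exact hadd x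
  · intro f f' a ha y
    induction y using Quotient.inductionOn with
    | h x => exact ha x
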